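/- arXiv:1104.3812 — 2 statements merged into one kernel-verified Lean document; each statement's English description precedes it below -/
import Mathlib

section
/- Let A be a Banach algebra and let φ ∈ A*. Then the map A → A*, a ↦ a·φ is compact if and only if the map A → A*, a ↦ φ·a is compact. -/
open NormedSpace

noncomputable section

section Schauder
open Metric Set

/-- Schauder's theorem, one direction: the transpose of a compact operator is compact. -/
lemma schauder_transpose {X Y : Type*} [NormedAddCommGroup X] [NormedSpace ℝ X]
    [NormedAddCommGroup Y] [NormedSpace ℝ Y] (T : X →L[ℝ] Y) (hT : IsCompactOperator T) :
    IsCompactOperator ((ContinuousLinearMap.compL ℝ X Y ℝ).flip T) := by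
  set T' := (ContinuousLinearMap.compL ℝ X Y ℝ).flip T with hT'
  rw [← ContinuousLinearMap.coe_coe T',
    isCompactOperator_iff_isCompact_closure_image_closedBall (𝕜₁ := ℝ)
    (T' : StrongDual ℝ Y →ₗ[ℝ] StrongDual ℝ X) one_pos]
  refine TotallyBounded.isCompact_of_isClosed ?_ isClosed_closure
  refine TotallyBounded.closure ?_
  rw [Metric.totallyBounded_iff]
  intro ε hε
  -- compact set containing the image of the unit ball of X
  set K : Set Y := closure (T '' closedBall 0 1) with hKdef
  have hK : IsCompact K :=
    hT.isCompact_closure_image_closedBall (𝕜₁ := ℝ) (f := (T : X →ₗ[ℝ] Y)) 1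
  obtain ⟨s, hsK, hsfin, hscov⟩ :=
    Metric.finite_approx_of_totallyBounded hK.totallyBounded (ε/4) (by linarith)
  haveI : Fintype s := hsfin.fintype
  -- restriction map to finitely many coordinates
  set R : StrongDual ℝ Y → (s → ℝ) := fun ψ i => ψ i with hR
  set M : ℝ := (((Finset.univ : Finset s).sup fun i => ‖(i : Y)‖₊ : NNReal) : ℝ) with hM
  have hRB : R '' closedBall 0 1 ⊆ closedBall 0 M := by
    rintro _ ⟨ψ, hψ, rfl⟩
    rw [mem_closedBall_zero_iff] at hψ ⊢
    rw [pi_norm_le_iff_of_nonneg (by positivity)]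
    intro i
    calc ‖ψ i‖ ≤ ‖ψ‖ * ‖(i : Y)‖ := ψ.le_opNorm _
    _ ≤ 1 * ‖(i : Y)‖ := by gcongr
    _ = ‖(i : Y)‖ := one_mul _
    _ ≤ M := by
        rw [hM]
        have := Finset.le_sup (f := fun i : s => ‖(i : Y)‖₊) (Finset.mem_univ i)
        exact_mod_cast NNReal.coe_le_coe.2 this
  have hRtb : TotallyBounded (R '' closedBall 0 1) :=
    (isCompact_closedBall (0 : s → ℝ) M).totallyBounded.subset hRB
  obtain ⟨t, hts, htfin, htcov⟩ :=
    Metric.finite_approx_of_totallyBounded hRtb (ε/4) (by linarith)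
  -- pick preimages of the centers
  choose g hg1 hg2 using fun c (hc : c ∈ t) => (hts hc : c ∈ R '' closedBall 0 1)
  classical
  refine ⟨T' '' {ψ | ∃ c, ∃ hc : c ∈ t, ψ = g c hc}, ?_, ?_⟩
  · apply Set.Finite.image
    haveI := htfin.to_subtype
    have hsub : {ψ | ∃ c, ∃ hc : c ∈ t, ψ = g c hc} ⊆
        (fun c : t => g c c.2) '' Set.univ := by
      rintro ψ ⟨c, hc, rfl⟩; exact ⟨⟨c, hc⟩, trivial, rfl⟩
    exact (Set.finite_univ.image _).subset hsub
  · rintro _ ⟨ψ, hψ, rfl⟩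
    have := htcov ⟨ψ, hψ, rfl⟩
    simp only [Set.mem_iUnion] at this
    obtain ⟨c, hc, hdist⟩ := this
    rw [mem_ball] at hdist
    refine Set.mem_iUnion.2 ⟨T' (g c hc), Set.mem_iUnion.2 ⟨⟨g c hc, ⟨c, hc, rfl⟩, rfl⟩, ?_⟩⟩
    rw [mem_ball]
    set ψ' := g c hc with hψ'
    have hψ'B : ψ' ∈ closedBall (0 : StrongDual ℝ Y) 1 := hg1 c hc
    have hcoord : ∀ i : s, ‖ψ (i : Y) - ψ' (i : Y)‖ < ε/4 := by
      intro i
      have h1 : dist (R ψ) c < ε/4 := hdist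
      have h2 : R ψ' = c := hg2 c hc
      have := dist_le_pi_dist (R ψ) (R ψ') i
      rw [h2] at this
      calc ‖ψ (i : Y) - ψ' (i : Y)‖ = dist (R ψ i) (R ψ' i) := by
            rw [dist_eq_norm]
      _ ≤ dist (R ψ) (R ψ') := dist_le_pi_dist _ _ i
      _ < ε/4 := by rw [h2]; exact hdist
    have hnorm : ‖T' ψ - T' ψ'‖ ≤ 3*ε/4 := by
      have : T' ψ - T' ψ' = T' (ψ - ψ') := by rw [map_sub]
      rw [this]
      refine ContinuousLinearMap.opNorm_le_of_unit_norm (by linarith) fun x hx => ?_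
      have hTx : T x ∈ K := subset_closure ⟨x, by
        simp [mem_closedBall_zero_iff, hx], rfl⟩
      have := hscov hTx
      simp only [Set.mem_iUnion] at this
      obtain ⟨y, hy, hty⟩ := this
      rw [mem_ball, dist_eq_norm] at hty
      have happ : T' (ψ - ψ') x = (ψ - ψ') (T x) := rfl
      have hψψ' : ‖ψ - ψ'‖ ≤ 2 := by
        rw [mem_closedBall_zero_iff] at hψ hψ'B
        calc ‖ψ - ψ'‖ ≤ ‖ψ‖ + ‖ψ'‖ := norm_sub_le _ _
        _ ≤ 1 + 1 := add_le_add hψ hψ'B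
        _ = 2 := by norm_num
      calc ‖T' (ψ - ψ') x‖ = ‖(ψ - ψ') (T x - y) + (ψ (y) - ψ' (y))‖ := by
            rw [happ]; congr 1; simp only [map_sub, ContinuousLinearMap.sub_apply]; ring
      _ ≤ ‖(ψ - ψ') (T x - y)‖ + ‖ψ y - ψ' y‖ := norm_add_le _ _
      _ ≤ ‖ψ - ψ'‖ * ‖T x - y‖ + ε/4 := by
            refine add_le_add ((ψ - ψ').le_opNorm _) (le_of_lt (hcoord ⟨y, hy⟩))
      _ ≤ 2 * (ε/4) + ε/4 := by
            refine add_le_add ?_ le_rfl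
            exact mul_le_mul hψψ' hty.le (norm_nonneg _) (by norm_num)
      _ = 3*ε/4 := by ring
    calc dist (T' ψ) (T' ψ') = ‖T' ψ - T' ψ'‖ := dist_eq_norm _ _
    _ ≤ 3*ε/4 := hnorm
    _ < ε := by linarith

end Schauder

/-- A bounded operator is weakly compact if the image of the closed unit ball has
compact closure in the weak topology of the codomain. -/
def IsWeaklyCompactOperator {X Y : Type*} [NormedAddCommGroup X] [NormedSpace ℝ X]
    [NormedAddCommGroup Y] [NormedSpace ℝ Y] (T : X →L[ℝ] Y) : Prop :=
  IsCompact (closure (toWeakSpace ℝ Y '' (T '' Metric.closedBall 0 1)))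

/-- A normed space is reflexive if the canonical embedding into the bidual is surjective. -/
def IsReflexiveSpace (E : Type*) [NormedAddCommGroup E] [NormedSpace ℝ E] : Prop :=
  Function.Surjective (inclusionInDoubleDual ℝ E)

/-- The orbit map `a ↦ a·φ`, where `⟨a·φ, b⟩ = ⟨φ, b * a⟩`. -/
def leftOrbit {A : Type*} [NormedRing A] [NormedAlgebra ℝ A] (φ : StrongDual ℝ A) :
    A →L[ℝ] StrongDual ℝ A :=
  (ContinuousLinearMap.compL ℝ A A ℝ φ).comp (ContinuousLinearMap.mul ℝ A).flip

/-- The orbit map `a ↦ φ·a`, where `⟨φ·a, b⟩ = ⟨φ, a * b⟩`. -/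
def rightOrbit {A : Type*} [NormedRing A] [NormedAlgebra ℝ A] (φ : StrongDual ℝ A) :
    A →L[ℝ] StrongDual ℝ A :=
  (ContinuousLinearMap.compL ℝ A A ℝ φ).comp (ContinuousLinearMap.mul ℝ A)

/-- For a Banach algebra `A` and `φ ∈ A*`, the map `a ↦ a·φ` is compact
iff the map `a ↦ φ·a` is compact. -/
theorem leftOrbit_compact_iff_rightOrbit (A : Type*) [NormedRing A]
    [NormedAlgebra ℝ A] [CompleteSpace A] (φ : StrongDual ℝ A) :
    IsCompactOperator (leftOrbit φ) ↔ IsCompactOperator (rightOrbit φ) := by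
  have key : ∀ (S R : A →L[ℝ] StrongDual ℝ A),
      R = (((ContinuousLinearMap.compL ℝ A (StrongDual ℝ A) ℝ).flip S).comp
        (inclusionInDoubleDual ℝ A)) → IsCompactOperator S → IsCompactOperator R := by
    intro S R hSR hS
    have h1 := schauder_transpose S hS
    have h2 := h1.comp_clm (inclusionInDoubleDual ℝ A)
    rw [hSR]
    exact h2
  constructor
  · exact key (leftOrbit φ) (rightOrbit φ) (by ext a b; rfl)
  · exact key (rightOrbit φ) (leftOrbit φ) (by ext a b; rfl)
end
end

section
/- Let H and K be Hilbert spaces, and suppose the space K(K,H) of compact operators from K to H is reflexive as a Banach space. Then H or K is finite dimensional. -/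
open NormedSpace

noncomputable section

open scoped InnerProductSpace

/-- An infinite-dimensional Hilbert space contains an orthonormal sequence. -/
lemma aux_exists_orthonormal_seq {E : Type*} [NormedAddCommGroup E] [InnerProductSpace ℝ E]
    [CompleteSpace E] (h : ¬ FiniteDimensional ℝ E) : ∃ v : ℕ → E, Orthonormal ℝ v := by
  obtain ⟨w, b, hb⟩ := exists_hilbertBasis ℝ E
  have hw : w.Infinite := by
    by_contra hfin
    rw [Set.not_infinite] at hfin
    apply h
    have hfd : FiniteDimensional ℝ (Submodule.span ℝ w : Submodule ℝ E) :=
      FiniteDimensional.span_of_finite ℝ hfin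
    have hcl : (Submodule.span ℝ w).topologicalClosure = Submodule.span ℝ w :=
      IsClosed.submodule_topologicalClosure_eq (Submodule.closed_of_finiteDimensional _)
    have hd := b.dense_span
    rw [hb, Subtype.range_coe, hcl] at hd
    rw [hd] at hfd
    exact Submodule.topEquiv.finiteDimensional
  obtain emb := hw.natEmbedding
  exact ⟨fun n => b (emb n), b.orthonormal.comp _ emb.injective⟩

lemma aux_isCompactOperator_rankOne {K H : Type*} [NormedAddCommGroup K]
    [InnerProductSpace ℝ K] [NormedAddCommGroup H] [InnerProductSpace ℝ H] (e : K) (f : H) :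
    IsCompactOperator ((innerSL ℝ e).smulRight f) := by
  refine ⟨(fun t : ℝ => t • f) '' Metric.closedBall 0 ‖e‖, ?_, ?_⟩
  · exact (isCompact_closedBall 0 ‖e‖).image (continuous_id.smul continuous_const)
  · refine Filter.mem_of_superset (Metric.closedBall_mem_nhds 0 one_pos) ?_
    intro k hk
    rw [Metric.mem_closedBall, dist_zero_right] at hk
    refine ⟨⟪e, k⟫_ℝ, ?_, by simp⟩
    rw [Metric.mem_closedBall, dist_zero_right, Real.norm_eq_abs]
    calc |⟪e, k⟫_ℝ| ≤ ‖e‖ * ‖k‖ := abs_real_inner_le_norm e k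
    _ ≤ ‖e‖ * 1 := by gcongr
    _ = ‖e‖ := mul_one _

lemma aux_geom_sum (N : ℕ) :
    ∑ m ∈ Finset.range N, ((1 : ℝ) / 2) ^ (m + 1) = 1 - (1 / 2 : ℝ) ^ N := by
  induction N with
  | zero => simp
  | succ N ih =>
    rw [Finset.sum_range_succ, ih, pow_succ]
    ring

set_option maxHeartbeats 2000000 in
set_option synthInstance.maxHeartbeats 1000000 in
/-- If the space `K(K, H)` of compact operators between Hilbert spaces
`K` and `H` is reflexive as a Banach space, then `H` or `K` is finite dimensional. -/
theorem finiteDimensional_of_compactOperators_reflexive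
    {H K : Type*}
    [NormedAddCommGroup H] [InnerProductSpace ℝ H] [CompleteSpace H]
    [NormedAddCommGroup K] [InnerProductSpace ℝ K] [CompleteSpace K]
    (hrefl : IsReflexiveSpace (compactOperator (RingHom.id ℝ) K H)) :
    FiniteDimensional ℝ H ∨ FiniteDimensional ℝ K := by
  by_contra hcon
  rw [not_or] at hcon
  obtain ⟨hH, hK⟩ := hcon
  obtain ⟨f, hf⟩ := aux_exists_orthonormal_seq hH
  obtain ⟨e, he⟩ := aux_exists_orthonormal_seq hK
  set E := compactOperator (RingHom.id ℝ) K H with hE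
  letI : NormedAddCommGroup E := Submodule.normedAddCommGroup _
  letI : NormedSpace ℝ E := Submodule.normedSpace _
  -- rank-one operators, as elements of the space of compact operators
  let c : ℕ → E := fun n => ⟨(innerSL ℝ (e n)).smulRight (f n),
    aux_isCompactOperator_rankOne (e n) (f n)⟩
  -- the evaluation functionals `T ↦ ⟪f n, T (e n)⟫`
  let ψ : ℕ → StrongDual ℝ E := fun n =>
    ((innerSL ℝ (f n)).comp (ContinuousLinearMap.apply ℝ H (e n))).comp E.subtypeL
  have hψ_apply : ∀ (n : ℕ) (T : E), ψ n T = ⟪f n, (T : K →L[ℝ] H) (e n)⟫_ℝ := fun n T => rfl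
  have hψ_bound : ∀ (n : ℕ) (T : E), |ψ n T| ≤ ‖T‖ := by
    intro n T
    rw [hψ_apply]
    calc |⟪f n, (T : K →L[ℝ] H) (e n)⟫_ℝ| ≤ ‖f n‖ * ‖(T : K →L[ℝ] H) (e n)‖ :=
      abs_real_inner_le_norm _ _
    _ ≤ 1 * (‖(T : K →L[ℝ] H)‖ * ‖e n‖) := by
        rw [hf.1 n, one_mul, one_mul]
        exact (T : K →L[ℝ] H).le_opNorm (e n)
    _ = ‖T‖ := by rw [he.1 n, one_mul, mul_one]; rfl
  have hψ_norm : ∀ n : ℕ, ‖ψ n‖ ≤ 1 := by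
    intro n
    refine ContinuousLinearMap.opNorm_le_bound _ zero_le_one fun T => ?_
    rw [Real.norm_eq_abs, one_mul]
    exact hψ_bound n T
  -- the weights
  set lam : ℕ → ℝ := fun n => (1 / 2 : ℝ) ^ (n + 1) with hlam_def
  have hlam_pos : ∀ n, 0 < lam n := fun n => by positivity
  have hlam_summable : Summable lam := by
    have : Summable fun n : ℕ => (1 / 2 : ℝ) ^ n :=
      summable_geometric_of_lt_one (by norm_num) (by norm_num)
    simpa [hlam_def, pow_succ, mul_comm] using this.mul_left (1 / 2 : ℝ)
  have hlam_tsum : ∑' n, lam n = 1 := by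
    have h1 : ∀ n : ℕ, lam n = (1 / 2 : ℝ) * (1 / 2 : ℝ) ^ n := by
      intro n; simp [hlam_def, pow_succ, mul_comm]
    calc ∑' n, lam n = ∑' n : ℕ, (1 / 2 : ℝ) * (1 / 2 : ℝ) ^ n := by simp_rw [h1]
    _ = (1 / 2 : ℝ) * ∑' n : ℕ, (1 / 2 : ℝ) ^ n := tsum_mul_left
    _ = 1 := by rw [tsum_geometric_two]; norm_num
  -- the functional φ
  have hsummable : Summable fun n => lam n • ψ n := by
    refine Summable.of_norm (hlam_summable.of_nonneg_of_le (fun n => norm_nonneg _) ?_)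
    intro n
    rw [norm_smul, Real.norm_eq_abs, abs_of_pos (hlam_pos n)]
    calc lam n * ‖ψ n‖ ≤ lam n * 1 := by
          exact mul_le_mul_of_nonneg_left (hψ_norm n) (hlam_pos n).le
    _ = lam n := mul_one _
  set φ : StrongDual ℝ E := ∑' n, lam n • ψ n with hφ_def
  have hφ_apply : ∀ T : E, φ T = ∑' n, lam n * ψ n T := by
    intro T
    have h1 : HasSum (fun n => lam n • ψ n) φ := hsummable.hasSum
    have h2 := h1.mapL (ContinuousLinearMap.apply ℝ ℝ T)
    have h3 : HasSum (fun n => lam n * ψ n T) (φ T) := by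
      simpa [ContinuousLinearMap.smul_apply, smul_eq_mul] using h2
    exact h3.tsum_eq.symm
  -- the finite-rank partial sums
  set S : ℕ → E := fun N => ∑ n ∈ Finset.range N, c n with hS_def
  have hS_coe : ∀ N, ((S N : E) : K →L[ℝ] H)
      = ∑ n ∈ Finset.range N, (innerSL ℝ (e n)).smulRight (f n) := by
    intro N
    simp [hS_def, c]
  have hS_apply : ∀ (N : ℕ) (k : K),
      ((S N : E) : K →L[ℝ] H) k = ∑ n ∈ Finset.range N, ⟪e n, k⟫_ℝ • f n := by
    intro N k
    rw [hS_coe]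
    simp
  have hS_norm : ∀ N, ‖(S N : E)‖ ≤ 1 := by
    intro N
    show ‖((S N : E) : K →L[ℝ] H)‖ ≤ 1
    refine ContinuousLinearMap.opNorm_le_bound _ zero_le_one fun k => ?_
    rw [one_mul, hS_apply]
    have hsq : ‖∑ n ∈ Finset.range N, ⟪e n, k⟫_ℝ • f n‖ ^ 2 ≤ ‖k‖ ^ 2 := by
      have h1 : ⟪∑ n ∈ Finset.range N, ⟪e n, k⟫_ℝ • f n,
          ∑ n ∈ Finset.range N, ⟪e n, k⟫_ℝ • f n⟫_ℝ
          = ∑ n ∈ Finset.range N, ⟪e n, k⟫_ℝ * ⟪e n, k⟫_ℝ := by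
        simpa using hf.inner_sum (fun n => ⟪e n, k⟫_ℝ) (fun n => ⟪e n, k⟫_ℝ) (Finset.range N)
      rw [← real_inner_self_eq_norm_sq, h1]
      calc ∑ n ∈ Finset.range N, ⟪e n, k⟫_ℝ * ⟪e n, k⟫_ℝ
          = ∑ n ∈ Finset.range N, ‖⟪e n, k⟫_ℝ‖ ^ 2 := by
            refine Finset.sum_congr rfl fun n _ => ?_
            rw [Real.norm_eq_abs, sq_abs, sq]
      _ ≤ ‖k‖ ^ 2 := he.sum_inner_products_le k
    have := Real.sqrt_le_sqrt hsq
    rwa [Real.sqrt_sq (norm_nonneg _), Real.sqrt_sq (norm_nonneg _)] at this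
  have hψS : ∀ (m N : ℕ), ψ m (S N) = if m < N then 1 else 0 := by
    intro m N
    rw [hψ_apply, hS_apply]
    by_cases hm : m < N
    · rw [if_pos hm]
      have h1 : ∑ n ∈ Finset.range N, ⟪e n, e m⟫_ℝ • f n = f m := by
        rw [Finset.sum_eq_single m]
        · rw [orthonormal_iff_ite.mp he m m, if_pos rfl, one_smul]
        · intro n _ hnm
          rw [orthonormal_iff_ite.mp he n m, if_neg hnm, zero_smul]
        · intro hmem; exact absurd (Finset.mem_range.mpr hm) hmem
      rw [h1, real_inner_self_eq_norm_sq, hf.1 m, one_pow]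
    · rw [if_neg hm]
      have h1 : ∑ n ∈ Finset.range N, ⟪e n, e m⟫_ℝ • f n = 0 := by
        refine Finset.sum_eq_zero fun n hn => ?_
        have hnm : n ≠ m := by
          intro hc; exact hm (hc ▸ Finset.mem_range.mp hn)
        rw [orthonormal_iff_ite.mp he n m, if_neg hnm, zero_smul]
      rw [h1, inner_zero_right]
  have hφS : ∀ N, φ (S N) = 1 - (1 / 2 : ℝ) ^ N := by
    intro N
    rw [hφ_apply]
    have h1 : (fun m => lam m * ψ m (S N)) = fun m => if m ∈ Finset.range N then lam m else 0 := by
      funext m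
      rw [hψS]
      by_cases hm : m < N
      · rw [if_pos hm, if_pos (Finset.mem_range.mpr hm), mul_one]
      · rw [if_neg hm, if_neg (fun hc => hm (Finset.mem_range.mp hc)), mul_zero]
    rw [h1, tsum_eq_sum (fun m hm => if_neg hm)]
    have h2 : ∑ m ∈ Finset.range N, (if m ∈ Finset.range N then lam m else 0)
        = ∑ m ∈ Finset.range N, lam m := Finset.sum_congr rfl fun m hm => if_pos hm
    rw [h2]
    exact aux_geom_sum N
  have hφ_ge : 1 ≤ ‖φ‖ := by
    have hbd : ∀ N : ℕ, 1 - (1 / 2 : ℝ) ^ N ≤ ‖φ‖ := by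
      intro N
      calc 1 - (1 / 2 : ℝ) ^ N = φ (S N) := (hφS N).symm
      _ ≤ |φ (S N)| := le_abs_self _
      _ ≤ ‖φ‖ * ‖(S N : E)‖ := by
          have := φ.le_opNorm (S N)
          rwa [Real.norm_eq_abs] at this
      _ ≤ ‖φ‖ * 1 := mul_le_mul_of_nonneg_left (hS_norm N) (norm_nonneg _)
      _ = ‖φ‖ := mul_one _
    have hlim : Filter.Tendsto (fun N : ℕ => 1 - (1 / 2 : ℝ) ^ N) Filter.atTop (nhds 1) := by
      have h0 : Filter.Tendsto (fun N : ℕ => (1 / 2 : ℝ) ^ N) Filter.atTop (nhds 0) :=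
        tendsto_pow_atTop_nhds_zero_of_lt_one (by norm_num) (by norm_num)
      simpa using (tendsto_const_nhds.sub h0)
    exact le_of_tendsto' hlim hbd
  have hφ_ne : φ ≠ 0 := by
    intro hc
    rw [hc, norm_zero] at hφ_ge
    linarith
  -- norm attainment from reflexivity
  obtain ⟨Φ, hΦ_norm, hΦφ⟩ := exists_dual_vector ℝ φ (norm_ne_zero_iff.mpr hφ_ne)
  obtain ⟨x, hx⟩ := hrefl Φ
  have hx_norm : ‖x‖ = 1 := by
    have : ‖inclusionInDoubleDual ℝ E x‖ = ‖x‖ := (inclusionInDoubleDualLi (𝕜 := ℝ) (E := ↥E)).norm_map x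
    rw [hx, hΦ_norm] at this
    exact this.symm
  have hφx : φ x = ‖φ‖ := by
    have hΦφ' : Φ φ = ‖φ‖ := by exact_mod_cast hΦφ
    have h1 : Φ φ = φ x := by rw [← hx]; rfl
    rw [← h1, hΦφ']
  -- all coordinates equal 1
  set t : ℕ → ℝ := fun n => ψ n x with ht_def
  have ht_le : ∀ n, t n ≤ 1 := by
    intro n
    have := hψ_bound n x
    rw [hx_norm] at this
    exact (le_abs_self _).trans this
  have ht_summable : Summable fun n => lam n * t n := by
    refine Summable.of_norm (hlam_summable.of_nonneg_of_le (fun n => norm_nonneg _) ?_)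
    intro n
    rw [Real.norm_eq_abs, abs_mul, abs_of_pos (hlam_pos n)]
    have h1 := hψ_bound n x
    rw [hx_norm] at h1
    calc lam n * |t n| ≤ lam n * 1 := mul_le_mul_of_nonneg_left h1 (hlam_pos n).le
    _ = lam n := mul_one _
  have ht_sum : ∑' n, lam n * t n = ‖φ‖ := by rw [← hφx, hφ_apply]
  have ht_eq : ∀ n, t n = 1 := by
    intro m
    by_contra hne
    have hlt : t m < 1 := lt_of_le_of_ne (ht_le m) hne
    have hstrict : ∑' n, lam n * t n < ∑' n, lam n := by
      have h1 : ∀ n, lam n * t n ≤ lam n := by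
        intro n
        calc lam n * t n ≤ lam n * 1 := mul_le_mul_of_nonneg_left (ht_le n) (hlam_pos n).le
        _ = lam n := mul_one _
      have h2 : lam m * t m < lam m := by
        calc lam m * t m < lam m * 1 := by
              exact (mul_lt_mul_iff_right₀ (hlam_pos m)).mpr hlt
        _ = lam m := mul_one _
      exact Summable.tsum_lt_tsum h1 h2 ht_summable hlam_summable
    rw [ht_sum, hlam_tsum] at hstrict
    linarith
  -- compactness contradiction
  have hxc : IsCompactOperator ((x : E) : K →L[ℝ] H) := x.2
  have hxc' : IsCompactOperator (((x : E) : K →L[ℝ] H) : K →ₗ[ℝ] H) := hxc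
  have hcomp : IsCompact (closure (((x : E) : K →L[ℝ] H) '' Metric.closedBall 0 1)) := by
    have := hxc'.isCompact_closure_image_closedBall (𝕜₁ := ℝ) 1
    simpa using this
  set u : ℕ → H := fun n => ((x : E) : K →L[ℝ] H) (e n) with hu_def
  have hu_mem : ∀ n, u n ∈ closure (((x : E) : K →L[ℝ] H) '' Metric.closedBall 0 1) := by
    intro n
    apply subset_closure
    exact ⟨e n, by simp [Metric.mem_closedBall, dist_zero_right, he.1 n], rfl⟩
  obtain ⟨y, -, g, hg_mono, hg_tend⟩ := hcomp.tendsto_subseq hu_mem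
  have h_one : ∀ k, ⟪f (g k), u (g k)⟫_ℝ = 1 := by
    intro k
    have h := ht_eq (g k)
    simp only [ht_def] at h
    rw [hψ_apply] at h
    exact h
  have hy_tend : Filter.Tendsto (fun m => ⟪f m, y⟫_ℝ) Filter.atTop (nhds 0) := by
    have hsum2 : Summable fun m => ‖⟪f m, y⟫_ℝ‖ ^ 2 := hf.inner_products_summable y
    have h2 : Filter.Tendsto (fun m => ‖⟪f m, y⟫_ℝ‖ ^ 2) Filter.atTop (nhds 0) :=
      hsum2.tendsto_atTop_zero
    have h3 : Filter.Tendsto (fun m => ‖⟪f m, y⟫_ℝ‖) Filter.atTop (nhds 0) := by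
      have h2' := (Real.continuous_sqrt.tendsto 0).comp h2
      simp only [Function.comp_def, Real.norm_eq_abs, sq_abs] at h2' ⊢
      simpa [Real.sqrt_sq_eq_abs] using h2' 
    exact tendsto_zero_iff_norm_tendsto_zero.mpr h3
  have h2 : Filter.Tendsto (fun k => ⟪f (g k), y⟫_ℝ) Filter.atTop (nhds 0) :=
    hy_tend.comp hg_mono.tendsto_atTop
  have h3 : Filter.Tendsto (fun k => ⟪f (g k), u (g k) - y⟫_ℝ) Filter.atTop (nhds 0) := by
    have hb : ∀ k, |⟪f (g k), u (g k) - y⟫_ℝ| ≤ ‖u (g k) - y‖ := by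
      intro k
      calc |⟪f (g k), u (g k) - y⟫_ℝ| ≤ ‖f (g k)‖ * ‖u (g k) - y‖ := abs_real_inner_le_norm _ _
      _ = ‖u (g k) - y‖ := by rw [hf.1, one_mul]
    have hnorm : Filter.Tendsto (fun k => ‖u (g k) - y‖) Filter.atTop (nhds 0) := by
      have h4 : Filter.Tendsto (fun k => u (g k) - y) Filter.atTop (nhds 0) := by
        have := hg_tend.sub (tendsto_const_nhds (x := y))
        simpa [Function.comp_def] using this
      simpa using h4.norm
    refine squeeze_zero_norm (fun k => ?_) hnorm
    rw [Real.norm_eq_abs]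
    exact hb k
  have h4 : Filter.Tendsto (fun k => ⟪f (g k), u (g k)⟫_ℝ) Filter.atTop (nhds 0) := by
    have h5 : (fun k => ⟪f (g k), u (g k)⟫_ℝ)
        = fun k => ⟪f (g k), y⟫_ℝ + ⟪f (g k), u (g k) - y⟫_ℝ := by
      funext k
      rw [← inner_add_right]
      congr 1
      abel
    rw [h5]
    simpa using h2.add h3
  have h6 : Filter.Tendsto (fun _ : ℕ => (1 : ℝ)) Filter.atTop (nhds 0) := by
    have : (fun k : ℕ => ⟪f (g k), u (g k)⟫_ℝ) = fun _ => (1 : ℝ) := funext h_one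
    rwa [this] at h4
  have := tendsto_nhds_unique h6 tendsto_const_nhds
  norm_num at this
end
end
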